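/- Let U ⊆ ℂ be open and g : U → ℂ holomorphic with g'(z) ≠ 0 for all z ∈ U; set ω(x,y) = log|g'(x+iy)|. Fix x₀ ∈ ℝ and let J be an open interval with x₀ + iy ∈ U for all y ∈ J; define γ : J → ℝ² by γ(y) = g(x₀ + iy). Then γ is regular and its curvature κ(y) = ⟨γ''(y), Jγ'(y)⟩ / ‖γ'(y)‖³, where J denotes rotation by π/2 (J(a,b) = (−b,a)), satisfies κ(y) = e^{−ω(x₀,y)} · Re( g''(x₀+iy) / g'(x₀+iy) ) for all y ∈ J. Moreover, if α, β ∈ ℝ are such that 2ω_x(x₀,y) = −α e^{−ω(x₀,y)} − β e^{ω(x₀,y)} for all y ∈ J, then −2κ(y) = β + α e^{−2ω(x₀,y)} for all y ∈ J; in particular, if α = 0 then γ has constant curvature −β/2, so it is contained in a circle or a line. -/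

import Mathlib

open Set

private lemma hasDerivAt_re_of_complex' {f : ℝ → ℂ} {d : ℂ} {x : ℝ}
    (hf : HasDerivAt f d x) : HasDerivAt (fun t => (f t).re) d.re x := by
  have := (Complex.reCLM.hasFDerivAt.comp x hf.hasFDerivAt).hasDerivAt
  simpa [Function.comp_def] using this

private lemma hasDerivAt_im_of_complex' {f : ℝ → ℂ} {d : ℂ} {x : ℝ}
    (hf : HasDerivAt f d x) : HasDerivAt (fun t => (f t).im) d.im x := by
  have := (Complex.imCLM.hasFDerivAt.comp x hf.hasFDerivAt).hasDerivAt
  simpa [Function.comp_def] using this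

private lemma aux_log_abs_deriv (g' g'' : ℂ → ℂ) (z : ℂ)
    (hg' : HasDerivAt g' (g'' z) z) (hne : g' z ≠ 0) :
    HasDerivAt (fun t : ℝ => Real.log (‖g' (z + (t : ℂ))‖))
      ((g'' z / g' z).re) 0 := by
  set a := g' z
  set b := g'' z
  have hu : HasDerivAt (fun t : ℝ => z + (t : ℂ)) 1 0 := by
    simpa using ((Complex.ofRealCLM.hasDerivAt (x := (0:ℝ))).const_add z)
  have hh : HasDerivAt (fun t : ℝ => g' (z + (t : ℂ))) b 0 := by
    have := HasDerivAt.scomp (g₁ := g') (h := fun t : ℝ => z + (t : ℂ))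
      (x := (0:ℝ)) (by simpa using hg') hu
    simpa [Function.comp_def] using this
  have hre := hasDerivAt_re_of_complex' hh
  have him := hasDerivAt_im_of_complex' hh
  have h0 : g' (z + ((0:ℝ):ℂ)) = a := by norm_num [a]
  have hns : HasDerivAt (fun t : ℝ => Complex.normSq (g' (z + (t : ℂ))))
      (2 * a.re * b.re + 2 * a.im * b.im) 0 := by
    have := (hre.mul hre).add (him.mul him)
    rw [h0] at this
    simp only [Complex.normSq_apply]
    convert this using 1
    · rfl
    · rfl
    · rfl
    · ring
  have hpos : 0 < Complex.normSq a := Complex.normSq_pos.2 hne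
  have hlog : HasDerivAt (fun t : ℝ => Real.log (Complex.normSq (g' (z + (t : ℂ)))))
      ((Complex.normSq a)⁻¹ * (2 * a.re * b.re + 2 * a.im * b.im)) 0 := by
    have := (Real.hasDerivAt_log (x := Complex.normSq (g' (z + ((0:ℝ):ℂ))))
      (by rw [h0]; exact ne_of_gt hpos)).comp 0 hns
    rw [h0] at this
    simpa [Function.comp_def] using this
  have key : HasDerivAt (fun t : ℝ => Real.log (Complex.normSq (g' (z + (t : ℂ)))) / 2)
      ((Complex.normSq a)⁻¹ * (2 * a.re * b.re + 2 * a.im * b.im) / 2) 0 := hlog.div_const 2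
  have heq : (fun t : ℝ => Real.log (Complex.normSq (g' (z + (t : ℂ)))) / 2)
      = fun t : ℝ => Real.log (‖g' (z + (t : ℂ))‖) := by
    funext t
    rw [← Real.log_sqrt (Complex.normSq_nonneg _)]
    simp [Complex.norm_def]
  rw [heq] at key
  convert key using 1
  rw [Complex.div_re]
  field_simp

theorem curvature_of_capillary_parameter_curve
    (U : Set ℂ) (hU : IsOpen U)
    (g g' g'' : ℂ → ℂ)
    (hg : ∀ z ∈ U, HasDerivAt g (g' z) z)
    (hg' : ∀ z ∈ U, HasDerivAt g' (g'' z) z)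
    (hne : ∀ z ∈ U, g' z ≠ 0)
    (x₀ : ℝ) (J : Set ℝ) (hJopen : IsOpen J) (hJconn : J.OrdConnected)
    (hmem : ∀ y ∈ J, (x₀ : ℂ) + (y : ℂ) * Complex.I ∈ U)
    (γ' γ'' : ℝ → ℂ)
    (hγ' : ∀ y ∈ J, HasDerivAt (fun s : ℝ => g ((x₀ : ℂ) + (s : ℂ) * Complex.I)) (γ' y) y)
    (hγ'' : ∀ y ∈ J, HasDerivAt γ' (γ'' y) y)
    (κ : ℝ → ℝ)
    (hκ : ∀ y, κ y = (γ'' y * (starRingEnd ℂ) (Complex.I * γ' y)).re / ‖γ' y‖ ^ 3)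
    (α β : ℝ) (ωx : ℝ → ℝ)
    (hωx : ∀ y ∈ J, HasDerivAt
      (fun t : ℝ => Real.log (‖g' ((x₀ : ℂ) + (y : ℂ) * Complex.I + (t : ℂ))‖))
      (ωx y) 0) :
    (∀ y ∈ J, γ' y ≠ 0) ∧
    (∀ y ∈ J, κ y
      = Real.exp (-(Real.log (‖g' ((x₀ : ℂ) + (y : ℂ) * Complex.I)‖)))
        * (g'' ((x₀ : ℂ) + (y : ℂ) * Complex.I) / g' ((x₀ : ℂ) + (y : ℂ) * Complex.I)).re) ∧
    ((∀ y ∈ J, 2 * ωx y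
        = -α * Real.exp (-(Real.log (‖g' ((x₀ : ℂ) + (y : ℂ) * Complex.I)‖)))
          - β * Real.exp (Real.log (‖g' ((x₀ : ℂ) + (y : ℂ) * Complex.I)‖))) →
      (∀ y ∈ J, -2 * κ y
        = β + α * Real.exp (-2 * Real.log (‖g' ((x₀ : ℂ) + (y : ℂ) * Complex.I)‖))) ∧
      (α = 0 → ∀ y ∈ J, κ y = -β / 2)) := by
  -- the first derivative formula
  have hvd : ∀ y : ℝ, HasDerivAt (fun s : ℝ => (x₀ : ℂ) + (s : ℂ) * Complex.I) Complex.I y := by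
    intro y
    simpa using (((Complex.ofRealCLM.hasDerivAt (x := y)).mul_const Complex.I).const_add (x₀:ℂ))
  have key1 : ∀ y ∈ J, γ' y = Complex.I * g' ((x₀ : ℂ) + (y : ℂ) * Complex.I) := by
    intro y hy
    have hz := hmem y hy
    have := HasDerivAt.scomp (g₁ := g) (h := fun s : ℝ => (x₀ : ℂ) + (s : ℂ) * Complex.I)
      (x := y) (hg _ hz) (hvd y)
    exact (hγ' y hy).unique (by simpa [smul_eq_mul, Function.comp_def] using this)
  have key2 : ∀ y ∈ J, γ'' y = - g'' ((x₀ : ℂ) + (y : ℂ) * Complex.I) := by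
    intro y hy
    have hz := hmem y hy
    have hd2 : HasDerivAt (fun s : ℝ => Complex.I * g' ((x₀ : ℂ) + (s : ℂ) * Complex.I))
        (Complex.I * (Complex.I * g'' ((x₀ : ℂ) + (y : ℂ) * Complex.I))) y := by
      have := HasDerivAt.scomp (g₁ := g') (h := fun s : ℝ => (x₀ : ℂ) + (s : ℂ) * Complex.I)
        (x := y) (hg' _ hz) (hvd y)
      simpa [smul_eq_mul, mul_comm, mul_left_comm] using this.const_mul Complex.I
    have heq : γ' =ᶠ[nhds y] fun s : ℝ => Complex.I * g' ((x₀ : ℂ) + (s : ℂ) * Complex.I) := by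
      filter_upwards [hJopen.mem_nhds hy] with s hs
      exact key1 s hs
    have := hd2.congr_of_eventuallyEq heq
    have h := (hγ'' y hy).unique this
    rw [h, ← mul_assoc, Complex.I_mul_I]
    ring
  -- abbreviations
  have habs : ∀ y ∈ J, (0:ℝ) < ‖g' ((x₀ : ℂ) + (y : ℂ) * Complex.I)‖ := by
    intro y hy
    exact norm_pos_iff.mpr (hne _ (hmem y hy))
  have hne' : ∀ y ∈ J, γ' y ≠ 0 := by
    intro y hy
    rw [key1 y hy]
    exact mul_ne_zero Complex.I_ne_zero (hne _ (hmem y hy))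
  -- curvature formula
  have hcurv : ∀ y ∈ J, κ y
      = Real.exp (-(Real.log (‖g' ((x₀ : ℂ) + (y : ℂ) * Complex.I)‖)))
        * (g'' ((x₀ : ℂ) + (y : ℂ) * Complex.I) / g' ((x₀ : ℂ) + (y : ℂ) * Complex.I)).re := by
    intro y hy
    set z : ℂ := (x₀ : ℂ) + (y : ℂ) * Complex.I with hzdef
    set a := g' z
    set b := g'' z
    have ha : a ≠ 0 := hne _ (hmem y hy)
    have hr : (0:ℝ) < ‖a‖ := norm_pos_iff.mpr ha
    rw [hκ y, key1 y hy, key2 y hy]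
    rw [Real.exp_neg, Real.exp_log hr]
    have hnum : (-b * (starRingEnd ℂ) (Complex.I * (Complex.I * a))).re
        = (b * (starRingEnd ℂ) a).re := by
      congr 1
      rw [show Complex.I * (Complex.I * a) = -a by rw [← mul_assoc, Complex.I_mul_I]; ring]
      simp
    have hnorm : ‖Complex.I * a‖ = ‖a‖ := by
      simp
    rw [hnum, hnorm, Complex.div_re]
    have hns : Complex.normSq a = ‖a‖ * ‖a‖ := by
      rw [Complex.normSq_eq_norm_sq]; ring
    simp only [Complex.mul_re, Complex.conj_re, Complex.conj_im, hns]
    rw [div_eq_iff (pow_ne_zero 3 (ne_of_gt hr))]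
    field_simp
    ring
  refine ⟨hne', hcurv, ?_⟩
  intro hcap
  -- identify ωx
  have homega : ∀ y ∈ J, ωx y
      = (g'' ((x₀ : ℂ) + (y : ℂ) * Complex.I) / g' ((x₀ : ℂ) + (y : ℂ) * Complex.I)).re := by
    intro y hy
    exact (hωx y hy).unique
      (aux_log_abs_deriv g' g'' _ (hg' _ (hmem y hy)) (hne _ (hmem y hy)))
  have main : ∀ y ∈ J, -2 * κ y
      = β + α * Real.exp (-2 * Real.log (‖g' ((x₀ : ℂ) + (y : ℂ) * Complex.I)‖)) := by
    intro y hy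
    have hr : (0:ℝ) < ‖g' ((x₀ : ℂ) + (y : ℂ) * Complex.I)‖ := habs y hy
    set r := ‖g' ((x₀ : ℂ) + (y : ℂ) * Complex.I)‖ with hrdef
    have hk := hcurv y hy
    have hw := homega y hy
    have hc := hcap y hy
    rw [hw] at hc
    rw [Real.exp_neg, Real.exp_log hr] at hc hk
    have he2 : Real.exp (-2 * Real.log r) = (r * r)⁻¹ := by
      rw [show (-2 : ℝ) * Real.log r = -(Real.log r + Real.log r) by ring,
        Real.exp_neg, Real.exp_add, Real.exp_log hr]
    rw [he2]
    -- hc : 2 * re = -α * r⁻¹ - β * r ; hk : κ = r⁻¹ * re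
    have hre : (g'' ((x₀ : ℂ) + (y : ℂ) * Complex.I)
        / g' ((x₀ : ℂ) + (y : ℂ) * Complex.I)).re = r * κ y := by
      rw [hk]; field_simp
    rw [hre] at hc
    have hr0 : r ≠ 0 := ne_of_gt hr
    field_simp at hc ⊢
    nlinarith [hc, hr]
  refine ⟨main, ?_⟩
  intro hα y hy
  have := main y hy
  rw [hα] at this
  linarith
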